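/- Let (Ω, F, P) be a probability space, λ ∈ (0,1), and γ, ω_H, ω_L, α_H, α_L, β_H, β_L ≥ 0. Let (hH_n)_{n≥0}, (hL_n)_{n≥0}, (VH_n)_{n≥0}, (VL_n)_{n≥0} be integrable real random variables satisfying, for all n ≥ 1: hH_n = ω_H + γ·hH_{n−1} + (α_H/λ)·VH_{n−1} + (β_H/(1−λ))·VL_{n−1} almost surely, hL_n = ω_L + γ·hL_{n−1} + (α_L/λ)·VH_{n−1} + (β_L/(1−λ))·VL_{n−1} almost surely, together with E[VH_n] = λ·E[hH_n] and E[VL_n] = (1−λ)·E[hL_n] for all n ≥ 0. Then the mean vector m_n := (E[hH_n], E[hL_n]) ∈ ℝ² satisfies the affine recursion m_n = (ω_H, ω_L) + Ã·m_{n−1} with Ã = [[γ + α_H, β_H], [α_L, γ + β_L]]. Moreover, if the operator norm of Ã on Euclidean ℝ² is strictly less than 1, then sup_n (E[hH_n] + E[hL_n]) < ∞. -/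

import Mathlib

open MeasureTheory

lemma euclid_coord_le_norm {x : EuclideanSpace ℝ (Fin 2)} (i : Fin 2) : |x i| ≤ ‖x‖ := by
  rw [EuclideanSpace.norm_eq, ← Real.norm_eq_abs]
  calc ‖x i‖ = Real.sqrt (‖x i‖ ^ 2) := (Real.sqrt_sq (norm_nonneg _)).symm
    _ ≤ _ := Real.sqrt_le_sqrt (Finset.single_le_sum (f := fun j => ‖x j‖ ^ 2)
        (fun j _ => sq_nonneg _) (Finset.mem_univ i))

/-- The mean vector `m_n = (E[hH_n], E[hL_n])` of the coupled OGI GARCH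
recursions satisfies the deterministic affine recursion
`m_n = (ω_H, ω_L) + Ã m_{n−1}` with `Ã = [[γ+α_H, β_H], [α_L, γ+β_L]]`, and
if `Ã` has operator (spectral) norm `< 1` on Euclidean `ℝ²` then the first
moments `E[hH_n] + E[hL_n]` are uniformly bounded. -/
theorem ogi_mean_vector_recursion
    {Ω : Type*} {m0 : MeasurableSpace Ω} {μ : Measure Ω} [IsProbabilityMeasure μ]
    (l : ℝ) (hl0 : 0 < l) (hl1 : l < 1)
    (γ ωH ωL αH αL βH βL : ℝ)
    (hγ : 0 ≤ γ) (hωH : 0 ≤ ωH) (hωL : 0 ≤ ωL) (hαH : 0 ≤ αH) (hαL : 0 ≤ αL)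
    (hβH : 0 ≤ βH) (hβL : 0 ≤ βL)
    (hH hL VH VL : ℕ → Ω → ℝ)
    (hHint : ∀ n, Integrable (hH n) μ) (hLint : ∀ n, Integrable (hL n) μ)
    (VHint : ∀ n, Integrable (VH n) μ) (VLint : ∀ n, Integrable (VL n) μ)
    (hrecH : ∀ n : ℕ, 1 ≤ n → hH n =ᵐ[μ] fun x =>
      ωH + γ * hH (n - 1) x + (αH / l) * VH (n - 1) x + (βH / (1 - l)) * VL (n - 1) x)
    (hrecL : ∀ n : ℕ, 1 ≤ n → hL n =ᵐ[μ] fun x =>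
      ωL + γ * hL (n - 1) x + (αL / l) * VH (n - 1) x + (βL / (1 - l)) * VL (n - 1) x)
    (hVH : ∀ n : ℕ, ∫ x, VH n x ∂μ = l * ∫ x, hH n x ∂μ)
    (hVL : ∀ n : ℕ, ∫ x, VL n x ∂μ = (1 - l) * ∫ x, hL n x ∂μ)
    (Atil : Matrix (Fin 2) (Fin 2) ℝ)
    (hAtil : Atil = !![γ + αH, βH; αL, γ + βL])
    (m : ℕ → Fin 2 → ℝ)
    (hm : ∀ n : ℕ, m n = ![∫ x, hH n x ∂μ, ∫ x, hL n x ∂μ]) :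
    (∀ n : ℕ, 1 ≤ n → m n = ![ωH, ωL] + Atil.mulVec (m (n - 1))) ∧
    (‖Matrix.toEuclideanCLM (𝕜 := ℝ) Atil‖ < 1 →
      ∃ B : ℝ, ∀ n : ℕ, (∫ x, hH n x ∂μ) + (∫ x, hL n x ∂μ) ≤ B) := by
  have hl0' : l ≠ 0 := ne_of_gt hl0
  have hl1' : (1 : ℝ) - l ≠ 0 := by intro h; linarith
  have meanH : ∀ n : ℕ, 1 ≤ n → (∫ x, hH n x ∂μ) =
      ωH + (γ + αH) * (∫ x, hH (n-1) x ∂μ) + βH * (∫ x, hL (n-1) x ∂μ) := by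
    intro n hn
    rw [integral_congr_ae (hrecH n hn)]
    have i1 : Integrable (fun x => ωH + γ * hH (n-1) x) μ :=
      (integrable_const ωH).add ((hHint _).const_mul γ)
    have i2 : Integrable (fun x => ωH + γ * hH (n-1) x + αH / l * VH (n-1) x) μ :=
      i1.add ((VHint _).const_mul _)
    rw [integral_add i2 ((VLint _).const_mul _),
        integral_add i1 ((VHint _).const_mul _),
        integral_add (integrable_const _) ((hHint _).const_mul γ),
        integral_const, integral_const_mul, integral_const_mul, integral_const_mul,
        hVH, hVL]
    simp only [probReal_univ, ENNReal.toReal_one, smul_eq_mul, one_mul]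
    field_simp
    ring
  have meanL : ∀ n : ℕ, 1 ≤ n → (∫ x, hL n x ∂μ) =
      ωL + αL * (∫ x, hH (n-1) x ∂μ) + (γ + βL) * (∫ x, hL (n-1) x ∂μ) := by
    intro n hn
    rw [integral_congr_ae (hrecL n hn)]
    have i1 : Integrable (fun x => ωL + γ * hL (n-1) x) μ :=
      (integrable_const ωL).add ((hLint _).const_mul γ)
    have i2 : Integrable (fun x => ωL + γ * hL (n-1) x + αL / l * VH (n-1) x) μ :=
      i1.add ((VHint _).const_mul _)
    rw [integral_add i2 ((VLint _).const_mul _),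
        integral_add i1 ((VHint _).const_mul _),
        integral_add (integrable_const _) ((hLint _).const_mul γ),
        integral_const, integral_const_mul, integral_const_mul, integral_const_mul,
        hVH, hVL]
    simp only [probReal_univ, ENNReal.toReal_one, smul_eq_mul, one_mul]
    field_simp
    ring
  have hrec : ∀ n : ℕ, 1 ≤ n → m n = ![ωH, ωL] + Atil.mulVec (m (n - 1)) := by
    intro n hn
    funext i
    fin_cases i <;>
      simp [hm, hAtil, Matrix.mulVec, dotProduct, Fin.sum_univ_two,
        meanH n hn, meanL n hn] <;> ring
  refine ⟨hrec, fun hnorm => ?_⟩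
  set T := Matrix.toEuclideanCLM (𝕜 := ℝ) Atil with hT
  set r := ‖T‖ with hr
  have hr0 : 0 ≤ r := norm_nonneg _
  have hr1 : 0 < 1 - r := by linarith
  set v : ℕ → EuclideanSpace ℝ (Fin 2) := fun n => (WithLp.equiv 2 _).symm (m n) with hv
  set w : EuclideanSpace ℝ (Fin 2) := (WithLp.equiv 2 _).symm ![ωH, ωL] with hw
  have hvrec : ∀ n : ℕ, 1 ≤ n → v n = w + T (v (n - 1)) := by
    intro n hn
    have := hrec n hn
    simp only [hv, hw, hT]
    rw [WithLp.equiv_symm_apply, Matrix.toEuclideanCLM_toLp]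
    rw [this]
    rfl
  set C : ℝ := max ‖v 0‖ (‖w‖ / (1 - r)) with hC
  have hbound : ∀ n : ℕ, ‖v n‖ ≤ C := by
    intro n
    induction n with
    | zero => exact le_max_left _ _
    | succ k ih =>
      have h1 : ‖v (k + 1)‖ ≤ ‖w‖ + r * ‖v k‖ := by
        rw [hvrec (k + 1) (Nat.le_add_left 1 k)]
        simp only [Nat.add_sub_cancel]
        calc ‖w + T (v k)‖ ≤ ‖w‖ + ‖T (v k)‖ := norm_add_le _ _
          _ ≤ ‖w‖ + r * ‖v k‖ := by
              gcongr
              exact T.le_opNorm _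
      have h2 : ‖w‖ / (1 - r) ≤ C := le_max_right _ _
      have h3 : ‖w‖ ≤ C * (1 - r) := by
        rw [div_le_iff₀ hr1] at h2; linarith
      calc ‖v (k + 1)‖ ≤ ‖w‖ + r * ‖v k‖ := h1
        _ ≤ C * (1 - r) + r * C := by gcongr
        _ = C := by ring
  refine ⟨2 * C, fun n => ?_⟩
  have h0 : (∫ x, hH n x ∂μ) = v n 0 := by simp [hv, hm]
  have h1 : (∫ x, hL n x ∂μ) = v n 1 := by simp [hv, hm]
  rw [h0, h1]
  have hb := hbound n
  calc v n 0 + v n 1 ≤ |v n 0| + |v n 1| := by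
        exact add_le_add (le_abs_self _) (le_abs_self _)
    _ ≤ ‖v n‖ + ‖v n‖ := add_le_add (euclid_coord_le_norm 0) (euclid_coord_le_norm 1)
    _ ≤ C + C := add_le_add hb hb
    _ = 2 * C := by ring
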